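/- Up to conjugacy there is exactly one embedding of the real quaternions ℍ into M₂(ℂ): for every ℝ-algebra homomorphism φ : ℍ → M₂(ℂ) there exists an invertible matrix X ∈ GL₂(ℂ) such that for every quaternion q = a + bi + cj + dk (a, b, c, d ∈ ℝ), writing z = a + bi and w = c + di, one has φ(q) = X · [[z, w], [−w̄, z̄]] · X⁻¹. -/

import Mathlib

open Matrix Complex

lemma key_conj (A B : Matrix (Fin 2) (Fin 2) ℂ) (hA : A * A = -1) (hB : B * B = -1)
    (hAB : A * B = -(B * A)) :
    ∃ X : (Matrix (Fin 2) (Fin 2) ℂ)ˣ,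
      A = X.val * !![Complex.I, 0; 0, -Complex.I] * (X⁻¹).val ∧
      B = X.val * !![0, 1; -1, 0] * (X⁻¹).val := by
  have hBA : B * A = -(A * B) := by rw [hAB, neg_neg]
  have hAB0 : A * B ≠ 0 := by
    intro h
    have : (A * B) * (A * B) = -1 := by
      calc (A*B)*(A*B) = A * (B*A) * B := by noncomm_ring
        _ = A * (-(A*B)) * B := by rw [hBA]
        _ = -((A*A)*(B*B)) := by noncomm_ring
        _ = -1 := by rw [hA, hB]; noncomm_ring
    rw [h, mul_zero] at this
    have := congrFun (congrFun this 0) 0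
    simp at this
  have hAne : A ≠ -(Complex.I • 1) := by
    intro h
    apply hAB0
    have hcomm : A * B = B * A := by
      rw [h]; simp [Matrix.mul_smul, Matrix.smul_mul]
    rw [hcomm] at hAB
    ext r c
    have h := congrFun (congrFun hAB r) c
    simp only [Matrix.neg_apply] at h
    rw [hcomm]
    show (B * A) r c = (0 : Matrix (Fin 2) (Fin 2) ℂ) r c
    simp only [Matrix.zero_apply]
    linear_combination h / 2
  have hne : A + Complex.I • 1 ≠ 0 := by
    intro h
    apply hAne
    rw [← sub_eq_zero] at h ⊢
    linear_combination (norm := abel) h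
  have hfac : (A - Complex.I • 1) * (A + Complex.I • 1) = 0 := by
    have hI : (Complex.I • (1 : Matrix (Fin 2) (Fin 2) ℂ)) * (Complex.I • 1) = -1 := by
      simp [Matrix.smul_mul, Matrix.mul_smul, smul_smul, Complex.I_mul_I]
    have hc : A * (Complex.I • (1 : Matrix (Fin 2) (Fin 2) ℂ)) = (Complex.I • 1) * A := by
      simp [Matrix.mul_smul, Matrix.smul_mul]
    rw [sub_mul, mul_add, mul_add, hc, hA, hI]
    abel
  obtain ⟨r0, c0, hrc⟩ : ∃ r c, (A + Complex.I • 1) r c ≠ 0 := by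
    by_contra h
    push_neg at h
    exact hne (by ext r c; exact h r c)
  set v : Fin 2 → ℂ := (A + Complex.I • 1).mulVec (Pi.single c0 1) with hvdef
  have hv0 : v ≠ 0 := by
    intro h
    have := congrFun h r0
    rw [hvdef] at this
    simp [Matrix.mulVec_single] at this
    exact hrc this
  have hv : A.mulVec v = Complex.I • v := by
    have h0 : (A - Complex.I • 1).mulVec v = 0 := by
      rw [hvdef, Matrix.mulVec_mulVec, hfac, Matrix.zero_mulVec]
    rw [Matrix.sub_mulVec, sub_eq_zero, Matrix.smul_mulVec, Matrix.one_mulVec] at h0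
    exact h0
  set w : Fin 2 → ℂ := -(B.mulVec v) with hwdef
  have hBv : B.mulVec v = -w := by rw [hwdef, neg_neg]
  have hBw : B.mulVec w = v := by
    rw [hwdef, Matrix.mulVec_neg, Matrix.mulVec_mulVec, hB, Matrix.neg_mulVec,
      Matrix.one_mulVec, neg_neg]
  have hw0 : w ≠ 0 := by
    intro h
    apply hv0
    rw [← hBw, h, Matrix.mulVec_zero]
  have hw : A.mulVec w = (-Complex.I) • w := by
    rw [hwdef, Matrix.mulVec_neg, Matrix.mulVec_mulVec, hAB, Matrix.neg_mulVec,
      ← Matrix.mulVec_mulVec, hv, Matrix.mulVec_smul, hBv]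
    simp [smul_smul]
  set X : Matrix (Fin 2) (Fin 2) ℂ := Matrix.of (fun r c => ![v, w] c r) with hXdef
  have hXmv : ∀ u : Fin 2 → ℂ, X.mulVec u = u 0 • v + u 1 • w := by
    intro u
    funext r
    simp [hXdef, Matrix.mulVec, dotProduct, Fin.sum_univ_two, mul_comm]
  have hdet : IsUnit X.det := by
    rw [isUnit_iff_ne_zero]
    intro hd
    obtain ⟨u, hu0, hu⟩ := Matrix.exists_mulVec_eq_zero_iff.mpr hd
    have hu' : u 0 • v + u 1 • w = 0 := by rw [← hXmv]; exact hu
    have h1 : ∀ r, u 0 * v r + u 1 * w r = 0 := fun r => congrFun hu' r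
    have h2 : ∀ r, Complex.I * (u 0 * v r) + (-Complex.I) * (u 1 * w r) = 0 := by
      intro r
      have hAu : A.mulVec (u 0 • v + u 1 • w) = 0 := by
        rw [hu', Matrix.mulVec_zero]
      rw [Matrix.mulVec_add, Matrix.mulVec_smul, Matrix.mulVec_smul, hv, hw] at hAu
      have := congrFun hAu r
      simpa [mul_comm, mul_left_comm, mul_assoc] using this
    have hu1 : u 1 = 0 := by
      obtain ⟨r, hr⟩ : ∃ r, w r ≠ 0 := by
        by_contra h; push_neg at h; exact hw0 (funext h)
      have h3 : (2 * Complex.I) * (u 1 * w r) = 0 := by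
        linear_combination Complex.I * (h1 r) - h2 r
      rcases mul_eq_zero.mp h3 with h | h
      · simp [Complex.ext_iff] at h
      · rcases mul_eq_zero.mp h with h | h
        · exact h
        · exact absurd h hr
    have hu0' : u 0 = 0 := by
      obtain ⟨r, hr⟩ : ∃ r, v r ≠ 0 := by
        by_contra h; push_neg at h; exact hv0 (funext h)
      have := h1 r
      rw [hu1, zero_mul, add_zero] at this
      rcases mul_eq_zero.mp this with h | h
      · exact h
      · exact absurd h hr
    apply hu0
    funext r
    fin_cases r
    · exact hu0'
    · exact hu1
  refine ⟨⟨X, X⁻¹, Matrix.mul_nonsing_inv X hdet, Matrix.nonsing_inv_mul X hdet⟩, ?_, ?_⟩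
  · have hAX : A * X = X * !![Complex.I, 0; 0, -Complex.I] := by
      ext r c
      fin_cases c
      · have := congrFun hv r
        simp [Matrix.mul_apply, Fin.sum_univ_two, hXdef, Matrix.mulVec, dotProduct] at this ⊢
        first
        | exact this
        | (rw [this]; ring)
      · have := congrFun hw r
        simp [Matrix.mul_apply, Fin.sum_univ_two, hXdef, Matrix.mulVec, dotProduct] at this ⊢
        first
        | exact this
        | (rw [this]; ring)
    show A = X * !![Complex.I, 0; 0, -Complex.I] * X⁻¹
    calc A = A * (X * X⁻¹) := by rw [Matrix.mul_nonsing_inv X hdet, mul_one]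
      _ = (A * X) * X⁻¹ := by rw [mul_assoc]
      _ = _ := by rw [hAX]
  · have hBX : B * X = X * !![0, 1; -1, 0] := by
      ext r c
      fin_cases c
      · have := congrFun hBv r
        simp [Matrix.mul_apply, Fin.sum_univ_two, hXdef, Matrix.mulVec, dotProduct] at this ⊢
        first
        | exact this
        | (rw [this]; ring)
      · have := congrFun hBw r
        simp [Matrix.mul_apply, Fin.sum_univ_two, hXdef, Matrix.mulVec, dotProduct] at this ⊢
        first
        | exact this
        | (rw [this]; ring)
    show B = X * !![0, 1; -1, 0] * X⁻¹
    calc B = B * (X * X⁻¹) := by rw [Matrix.mul_nonsing_inv X hdet, mul_one]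
      _ = (B * X) * X⁻¹ := by rw [mul_assoc]
      _ = _ := by rw [hBX]




open Quaternion in
/-- Up to conjugacy there is exactly one embedding of the real quaternions `ℍ`
into `M₂(ℂ)`: every `ℝ`-algebra homomorphism `ℍ → M₂(ℂ)` is conjugate to the regular
embedding `a + bi + cj + dk ↦ [[z, w], [-conj w, conj z]]`, `z = a + bi`, `w = c + di`. -/
theorem quaternion_to_complex_matrix_conjugate_to_regular
    (φ : ℍ[ℝ] →ₐ[ℝ] Matrix (Fin 2) (Fin 2) ℂ) :
    ∃ X : (Matrix (Fin 2) (Fin 2) ℂ)ˣ, ∀ q : ℍ[ℝ],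
      φ q = X.val *
        !![(q.re : ℂ) + q.imI * Complex.I, (q.imJ : ℂ) + q.imK * Complex.I;
           -((starRingEnd ℂ) ((q.imJ : ℂ) + q.imK * Complex.I)),
           (starRingEnd ℂ) ((q.re : ℂ) + q.imI * Complex.I)] * (X⁻¹).val := by
  set qi : ℍ[ℝ] := ⟨0,1,0,0⟩ with hqi
  set qj : ℍ[ℝ] := ⟨0,0,1,0⟩ with hqj
  set qk : ℍ[ℝ] := ⟨0,0,0,1⟩ with hqk
  have hii : qi * qi = -1 := by
    ext <;> simp [Quaternion.re_mul, Quaternion.imI_mul, Quaternion.imJ_mul, Quaternion.imK_mul] <;> simp [hqi]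
  have hjj : qj * qj = -1 := by
    ext <;> simp [Quaternion.re_mul, Quaternion.imI_mul, Quaternion.imJ_mul, Quaternion.imK_mul] <;> simp [hqj]
  have hij : qi * qj = qk := by
    ext <;> simp [Quaternion.re_mul, Quaternion.imI_mul, Quaternion.imJ_mul, Quaternion.imK_mul] <;> simp [hqi, hqj, hqk]
  have hji : qj * qi = -qk := by
    ext <;> simp [Quaternion.re_mul, Quaternion.imI_mul, Quaternion.imJ_mul, Quaternion.imK_mul] <;> simp [hqi, hqj, hqk]
  set A := φ qi with hAdef
  set B := φ qj with hBdef
  have hA : A * A = -1 := by rw [hAdef, ← _root_.map_mul, hii, _root_.map_neg, _root_.map_one]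
  have hB : B * B = -1 := by rw [hBdef, ← _root_.map_mul, hjj, _root_.map_neg, _root_.map_one]
  have hABeq : A * B = -(B * A) := by
    rw [hAdef, hBdef, ← _root_.map_mul, ← _root_.map_mul, hij, hji, _root_.map_neg, neg_neg]
  have hK : φ qk = A * B := by rw [hAdef, hBdef, ← _root_.map_mul, hij]
  obtain ⟨X, hXA, hXB⟩ := key_conj A B hA hB hABeq
  have hXinv : X.val * (X⁻¹).val = 1 := Units.mul_inv X
  have hXinv' : (X⁻¹).val * X.val = 1 := Units.inv_mul X
  have hXK : A * B = X.val * !![0, Complex.I; Complex.I, 0] * (X⁻¹).val := by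
    rw [hXA, hXB]
    have hMk : !![Complex.I, 0; 0, -Complex.I] * !![0, (1:ℂ); -1, 0]
        = !![0, Complex.I; Complex.I, 0] := by
      ext r c; fin_cases r <;> fin_cases c <;>
        simp [Matrix.mul_apply, Fin.sum_univ_two]
    calc (X.val * !![Complex.I, 0; 0, -Complex.I] * (X⁻¹).val) *
          (X.val * !![0, (1:ℂ); -1, 0] * (X⁻¹).val)
        = X.val * !![Complex.I, 0; 0, -Complex.I] * ((X⁻¹).val * X.val) *
            (!![0, (1:ℂ); -1, 0] * (X⁻¹).val) := by noncomm_ring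
      _ = X.val * (!![Complex.I, 0; 0, -Complex.I] * !![0, (1:ℂ); -1, 0]) * (X⁻¹).val := by
            rw [hXinv']; noncomm_ring
      _ = _ := by rw [hMk]
  refine ⟨X, fun q => ?_⟩
  have hdecomp : q = q.re • (1 : ℍ[ℝ]) + q.imI • qi + q.imJ • qj + q.imK • qk := by
    ext <;> simp <;> simp [hqi, hqj, hqk]
  have hφq : φ q = q.re • (1 : Matrix (Fin 2) (Fin 2) ℂ) + q.imI • A + q.imJ • B
      + q.imK • (A * B) := by
    conv_lhs => rw [hdecomp]
    rw [map_add, map_add, map_add, _root_.map_smul, _root_.map_smul, _root_.map_smul, _root_.map_smul, _root_.map_one, hK]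
  have hMq : !![(q.re : ℂ) + q.imI * Complex.I, (q.imJ : ℂ) + q.imK * Complex.I;
           -((starRingEnd ℂ) ((q.imJ : ℂ) + q.imK * Complex.I)),
           (starRingEnd ℂ) ((q.re : ℂ) + q.imI * Complex.I)]
      = q.re • (1 : Matrix (Fin 2) (Fin 2) ℂ) + q.imI • !![Complex.I, 0; 0, -Complex.I]
        + q.imJ • !![0, (1:ℂ); -1, 0] + q.imK • !![0, Complex.I; Complex.I, 0] := by
    ext r c
    fin_cases r <;> fin_cases c <;>
      simp [Complex.ext_iff, Complex.real_smul] <;> ring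
  rw [hφq, hMq]
  rw [mul_add, mul_add, mul_add, add_mul, add_mul, add_mul]
  simp only [mul_smul_comm, smul_mul_assoc]
  rw [mul_one, hXinv, ← hXA, ← hXB, ← hXK]
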